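/- In the construction of row k of the greedy matrix A(n), the number |C| of complete columns lying strictly to the right of the column of the first one in row k (among columns of the matrix of the first k-1 rows) satisfies |C| ≤ (n³+n)·n/(n+1). -/
import Mathlib


/-- Number of ones in row `k` strictly to the left of column `l` (columns `1..l-1`). -/
def rowOnes (a : ℕ → ℕ → Bool) (k l : ℕ) : ℕ :=
  ((Finset.Ico 1 l).filter (fun j => a k j = true)).card

/-- Number of ones in column `l` strictly above row `k` (rows `1..k-1`). -/
def colOnes (a : ℕ → ℕ → Bool) (k l : ℕ) : ℕ :=
  ((Finset.Ico 1 k).filter (fun i => a i l = true)).card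

/-- The greedy (first-choice) matrix `A(n)`: entries are placed row by row, left to
right; a one is placed at `(k,l)` unless the row already has `n+1` ones to the left,
the column already has `n+1` ones above, or a rectangle of ones would be created. -/
def IsGreedy (n : ℕ) (a : ℕ → ℕ → Bool) : Prop :=
  (∀ i j, i = 0 ∨ j = 0 → a i j = false) ∧
  ∀ k l, 1 ≤ k → 1 ≤ l →
    (a k l = true ↔
      rowOnes a k l < n + 1 ∧ colOnes a k l < n + 1 ∧
      ¬ ∃ i j, 1 ≤ i ∧ i < k ∧ 1 ≤ j ∧ j < l ∧
        a i j = true ∧ a i l = true ∧ a k j = true)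

/-- In the construction of row `k` of the greedy matrix `A(n)`, the number of
complete columns strictly to the right of column `l` (the first non-complete column
of the matrix of the first `k-1` rows) is at most `(n^3+n)·n/(n+1)`. -/
theorem stmt19 (n : ℕ) (a : ℕ → ℕ → Bool) (h : IsGreedy n a) (k l : ℕ) (hk : 2 ≤ k)
    (hl : 1 ≤ l ∧ colOnes a k l < n + 1 ∧
      ∀ j, 1 ≤ j → colOnes a k j < n + 1 → l ≤ j) :
    ({j : ℕ | l < j ∧ colOnes a k j = n + 1}.ncard : ℚ) ≤
      ((n : ℚ) ^ 3 + n) * n / (n + 1) := by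
  classical
  obtain ⟨h0, hg⟩ := h
  obtain ⟨hl1, hlc, hlleast⟩ := hl
  -- basic bounds from the greedy property
  have rowbound : ∀ i j, 1 ≤ i → 1 ≤ j → a i j = true → rowOnes a i j ≤ n := by
    intro i j hi hj hij
    have := ((hg i j hi hj).mp hij).1
    omega
  have colbound : ∀ i j, 1 ≤ i → 1 ≤ j → a i j = true → colOnes a i j ≤ n := by
    intro i j hi hj hij
    have := ((hg i j hi hj).mp hij).2.1
    omega
  -- every row has at most n+1 ones
  have rowcard : ∀ i, 1 ≤ i → ∀ T : Finset ℕ, (∀ j ∈ T, 1 ≤ j ∧ a i j = true) →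
      T.card ≤ n + 1 := by
    intro i hi T hT
    by_contra hlt
    push_neg at hlt
    have hne : T.Nonempty := Finset.card_pos.mp (by omega)
    have hm := T.max'_mem hne
    have hsub : T.erase (T.max' hne) ⊆
        (Finset.Ico 1 (T.max' hne)).filter (fun j => a i j = true) := by
      intro j hj
      have hjT := Finset.mem_of_mem_erase hj
      have hjm : j ≠ T.max' hne := Finset.ne_of_mem_erase hj
      have hle := Finset.le_max' T j hjT
      simp only [Finset.mem_filter, Finset.mem_Ico]
      exact ⟨⟨(hT j hjT).1, lt_of_le_of_ne hle hjm⟩, (hT j hjT).2⟩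
    have h1 := Finset.card_le_card hsub
    rw [Finset.card_erase_of_mem hm] at h1
    have h2 := rowbound i (T.max' hne) hi (hT _ hm).1 (hT _ hm).2
    unfold rowOnes at h2
    omega
  -- every column has at most n+1 ones
  have colcard : ∀ j, 1 ≤ j → ∀ T : Finset ℕ, (∀ i ∈ T, 1 ≤ i ∧ a i j = true) →
      T.card ≤ n + 1 := by
    intro j hj T hT
    by_contra hlt
    push_neg at hlt
    have hne : T.Nonempty := Finset.card_pos.mp (by omega)
    have hm := T.max'_mem hne
    have hsub : T.erase (T.max' hne) ⊆
        (Finset.Ico 1 (T.max' hne)).filter (fun i => a i j = true) := by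
      intro i hi
      have hiT := Finset.mem_of_mem_erase hi
      have him : i ≠ T.max' hne := Finset.ne_of_mem_erase hi
      have hle := Finset.le_max' T i hiT
      simp only [Finset.mem_filter, Finset.mem_Ico]
      exact ⟨⟨(hT i hiT).1, lt_of_le_of_ne hle him⟩, (hT i hiT).2⟩
    have h1 := Finset.card_le_card hsub
    rw [Finset.card_erase_of_mem hm] at h1
    have h2 := colbound (T.max' hne) j (hT _ hm).1 hj (hT _ hm).2
    unfold colOnes at h2
    omega
  -- each row's set of ones is finite
  have hrowfin : ∀ i, 1 ≤ i → {j | a i j = true}.Finite := by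
    intro i hi
    by_contra hinf
    obtain ⟨T, hTsub, hTcard⟩ := Set.Infinite.exists_subset_card_eq hinf (n + 2)
    have := rowcard i hi T (fun j hj => ?_)
    · omega
    · have hjmem : a i j = true := hTsub hj
      refine ⟨?_, hjmem⟩
      rcases Nat.eq_zero_or_pos j with rfl | hp
      · rw [h0 i 0 (Or.inr rfl)] at hjmem; simp at hjmem
      · exact hp
  -- the set C of complete columns right of l is finite
  have hCfin : {j : ℕ | l < j ∧ colOnes a k j = n + 1}.Finite := by
    apply Set.Finite.subset (Set.Finite.biUnion (Set.finite_Icc 1 k)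
      (fun i (hi : i ∈ Set.Icc 1 k) => hrowfin i hi.1))
    intro j hj
    obtain ⟨hjl, hjc⟩ := hj
    have hpos : 0 < colOnes a k j := by omega
    unfold colOnes at hpos
    rw [Finset.card_pos] at hpos
    obtain ⟨i, hi⟩ := hpos
    simp only [Finset.mem_filter, Finset.mem_Ico] at hi
    exact Set.mem_biUnion (Set.mem_Icc.mpr ⟨hi.1.1, le_of_lt hi.1.2⟩) hi.2
  set F := hCfin.toFinset with hF
  have hFl : ∀ j ∈ F, l < j := by
    intro j hj
    exact (hCfin.mem_toFinset.mp hj).1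
  have hFc : ∀ j ∈ F, ((Finset.Ico 1 k).filter (fun i => a i j = true)).card = n + 1 := by
    intro j hj
    exact (hCfin.mem_toFinset.mp hj).2
  -- monotonicity of colOnes
  have hcolmono : ∀ i j, i ≤ k → colOnes a i j ≤ colOnes a k j := by
    intro i j hik
    unfold colOnes
    exact Finset.card_le_card (Finset.filter_subset_filter _ (Finset.Ico_subset_Ico le_rfl hik))
  -- if a row below k has no one at (i,l), either the row is full left of l or a
  -- rectangle blocks it
  have hblock : ∀ i, 1 ≤ i → i < k → a i l = false →
      rowOnes a i l = n + 1 ∨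
      ∃ i' j', 1 ≤ i' ∧ i' < i ∧ 1 ≤ j' ∧ j' < l ∧
        a i' j' = true ∧ a i' l = true ∧ a i j' = true := by
    intro i hi hik hfalse
    by_contra hc
    push_neg at hc
    obtain ⟨hrow, hrect⟩ := hc
    have hrle : rowOnes a i l ≤ n + 1 := by
      apply rowcard i hi
      intro j hj
      simp only [Finset.mem_filter, Finset.mem_Ico] at hj
      exact ⟨hj.1.1, hj.2⟩
    have hcl : colOnes a i l ≤ colOnes a k l := hcolmono i l (le_of_lt hik)
    have htrue : a i l = true := (hg i l hi hl1).mpr ⟨by omega, by omega,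
      fun ⟨i', j', p1, p2, p3, p4, p5, p6, p7⟩ => hrect i' j' p1 p2 p3 p4 p5 p6 p7⟩
    rw [htrue] at hfalse
    exact absurd hfalse (by simp)
  -- every row meeting F has at most n ones among the columns of F
  have hrowF : ∀ i, 1 ≤ i → ∀ j', 1 ≤ j' → j' ≤ l → a i j' = true →
      (F.filter (fun j => a i j = true)).card ≤ n := by
    intro i hi j' h1 h2 h3
    have hnotin : j' ∉ F.filter (fun j => a i j = true) := by
      intro hmem
      have := hFl j' (Finset.mem_of_mem_filter _ hmem)
      omega
    have hins := rowcard i hi (insert j' (F.filter (fun j => a i j = true))) ?_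
    · rw [Finset.card_insert_of_notMem hnotin] at hins; omega
    · intro j hj
      rcases Finset.mem_insert.mp hj with rfl | hj
      · exact ⟨h1, h3⟩
      · simp only [Finset.mem_filter] at hj
        have := hFl j hj.1
        exact ⟨by omega, hj.2⟩
  -- every row meeting F has a one on or left of column l
  have honeleft : ∀ i, 1 ≤ i → i < k → (∃ j ∈ F, a i j = true) →
      ∃ j', 1 ≤ j' ∧ j' ≤ l ∧ a i j' = true := by
    intro i hi hik hex
    by_cases hil : a i l = true
    · exact ⟨l, hl1, le_rfl, hil⟩
    · have hil' : a i l = false := by simpa using hil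
      rcases hblock i hi hik hil' with hrow | ⟨i', j', _, _, h3, h4, _, _, h7⟩
      · have hpos : 0 < rowOnes a i l := by omega
        unfold rowOnes at hpos
        rw [Finset.card_pos] at hpos
        obtain ⟨j', hj'⟩ := hpos
        simp only [Finset.mem_filter, Finset.mem_Ico] at hj'
        exact ⟨j', hj'.1.1, le_of_lt hj'.1.2, hj'.2⟩
      · exact ⟨j', h3, le_of_lt h4, h7⟩
  set L' := (Finset.Ico 1 k).filter (fun i => ∃ j ∈ F, a i j = true) with hL'
  -- double counting: (n+1)|F| ≤ n|L'|
  have hsum : (n + 1) * F.card ≤ L'.card * n := by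
    have e1 : ∑ j ∈ F, ((Finset.Ico 1 k).filter (fun i => a i j = true)).card
        = ∑ i ∈ Finset.Ico 1 k, (F.filter (fun j => a i j = true)).card := by
      simp_rw [Finset.card_filter]
      exact Finset.sum_comm
    have e2 : ∑ j ∈ F, ((Finset.Ico 1 k).filter (fun i => a i j = true)).card
        = F.card * (n + 1) := by
      rw [Finset.sum_congr rfl hFc, Finset.sum_const, smul_eq_mul]
    have e3 : ∑ i ∈ L', (F.filter (fun j => a i j = true)).card
        = ∑ i ∈ Finset.Ico 1 k, (F.filter (fun j => a i j = true)).card := by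
      apply Finset.sum_subset (Finset.filter_subset _ _)
      intro i hiK hiL
      rw [Finset.card_eq_zero, Finset.filter_eq_empty_iff]
      intro j hj hne
      exact hiL (Finset.mem_filter.mpr ⟨hiK, ⟨j, hj, hne⟩⟩)
    have e4 : ∑ i ∈ L', (F.filter (fun j => a i j = true)).card ≤ L'.card * n := by
      have := Finset.sum_le_card_nsmul L' (fun i => (F.filter (fun j => a i j = true)).card) n ?_
      · simpa [smul_eq_mul] using this
      · intro i hi
        simp only [hL', Finset.mem_filter, Finset.mem_Ico] at hi
        obtain ⟨⟨hi1, hik⟩, hex⟩ := hi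
        obtain ⟨j', h1, h2, h3⟩ := honeleft i hi1 hik hex
        exact hrowF i hi1 j' h1 h2 h3
    calc (n + 1) * F.card = F.card * (n + 1) := by ring
    _ = ∑ i ∈ Finset.Ico 1 k, (F.filter (fun j => a i j = true)).card := by rw [← e2, e1]
    _ = ∑ i ∈ L', (F.filter (fun j => a i j = true)).card := e3.symm
    _ ≤ L'.card * n := e4
  -- rows of L' with a one at column l: at most n of them
  have hL1 : (L'.filter (fun i => a i l = true)).card ≤ n := by
    have hsub : L'.filter (fun i => a i l = true) ⊆
        (Finset.Ico 1 k).filter (fun i => a i l = true) :=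
      Finset.filter_subset_filter _ (Finset.filter_subset _ _)
    have h1 := Finset.card_le_card hsub
    have h2 : ((Finset.Ico 1 k).filter (fun i => a i l = true)).card = colOnes a k l := rfl
    omega
  -- rows of L' without a one at column l: a rectangle blocks each
  have hrect : ∀ i ∈ L'.filter (fun i => ¬ a i l = true), ∃ p : ℕ × ℕ,
      1 ≤ p.1 ∧ p.1 < i ∧ a p.1 l = true ∧ 1 ≤ p.2 ∧ p.2 < l ∧
      a p.1 p.2 = true ∧ a i p.2 = true := by
    intro i hi
    simp only [Finset.mem_filter, hL', Finset.mem_Ico] at hi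
    obtain ⟨⟨⟨hi1, hik⟩, hex⟩, hil⟩ := hi
    have hil' : a i l = false := by simpa using hil
    rcases hblock i hi1 hik hil' with hrow | ⟨i', j', h1, h2, h3, h4, h5, h6, h7⟩
    · exfalso
      obtain ⟨j, hjF, hj⟩ := hex
      have hjl := hFl j hjF
      have hnot : j ∉ (Finset.Ico 1 l).filter (fun j'' => a i j'' = true) := by
        simp only [Finset.mem_filter, Finset.mem_Ico]
        omega
      have hins := rowcard i hi1 (insert j ((Finset.Ico 1 l).filter (fun j'' => a i j'' = true))) ?_
      · rw [Finset.card_insert_of_notMem hnot] at hins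
        have hre : ((Finset.Ico 1 l).filter (fun j'' => a i j'' = true)).card
            = rowOnes a i l := rfl
        omega
      · intro j'' hj''
        rcases Finset.mem_insert.mp hj'' with rfl | hmem
        · exact ⟨by omega, hj⟩
        · simp only [Finset.mem_filter, Finset.mem_Ico] at hmem
          exact ⟨hmem.1.1, hmem.2⟩
    · exact ⟨(i', j'), h1, h2, h6, h3, h4, h5, h7⟩
  -- the blocked rows number at most n³
  have hL2 : (L'.filter (fun i => ¬ a i l = true)).card ≤ n * n * n := by
    set P := ((Finset.Ico 1 k).filter (fun i' => a i' l = true)).biUnion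
        (fun i' => ((Finset.Ico 1 l).filter (fun j' => a i' j' = true)).image
          (fun j' => (i', j'))) with hP
    have hPcard : P.card ≤ n * n := by
      refine le_trans Finset.card_biUnion_le ?_
      refine le_trans (Finset.sum_le_card_nsmul _ _ n ?_) ?_
      · intro i' hi'
        simp only [Finset.mem_filter, Finset.mem_Ico] at hi'
        refine le_trans Finset.card_image_le ?_
        have := rowbound i' l hi'.1.1 hl1 hi'.2
        unfold rowOnes at this
        exact this
      · rw [smul_eq_mul]
        have h2 : ((Finset.Ico 1 k).filter (fun i' => a i' l = true)).card = colOnes a k l := rfl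
        have h3 : ((Finset.Ico 1 k).filter (fun i' => a i' l = true)).card ≤ n := by omega
        exact Nat.mul_le_mul_right n h3
    have hsub2 : L'.filter (fun i => ¬ a i l = true) ⊆
        P.biUnion (fun p => ((Finset.Ico 1 k).filter (fun i => a i p.2 = true)).erase p.1) := by
      intro i hi
      obtain ⟨p, h1, h2, h3, h4, h5, h6, h7⟩ := hrect i hi
      have hiIco : i ∈ Finset.Ico 1 k :=
        Finset.mem_of_mem_filter _ (Finset.mem_of_mem_filter _ hi)
      have hik : i < k := (Finset.mem_Ico.mp hiIco).2
      rw [Finset.mem_biUnion]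
      refine ⟨p, ?_, ?_⟩
      · rw [hP, Finset.mem_biUnion]
        refine ⟨p.1, ?_, ?_⟩
        · simp only [Finset.mem_filter, Finset.mem_Ico]
          exact ⟨⟨h1, lt_trans h2 hik⟩, h3⟩
        · rw [Finset.mem_image]
          refine ⟨p.2, ?_, rfl⟩
          simp only [Finset.mem_filter, Finset.mem_Ico]
          exact ⟨⟨h4, h5⟩, h6⟩
      · rw [Finset.mem_erase]
        refine ⟨by omega, ?_⟩
        simp only [Finset.mem_filter]
        exact ⟨hiIco, h7⟩
    refine le_trans (Finset.card_le_card hsub2) ?_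
    refine le_trans Finset.card_biUnion_le ?_
    refine le_trans (Finset.sum_le_card_nsmul _ _ n ?_) ?_
    · intro p hp
      rw [hP, Finset.mem_biUnion] at hp
      obtain ⟨i', hi', hpim⟩ := hp
      rw [Finset.mem_image] at hpim
      obtain ⟨j', hj', hpe⟩ := hpim
      subst hpe
      simp only [Finset.mem_filter, Finset.mem_Ico] at hi' hj'
      have hcl : ((Finset.Ico 1 k).filter (fun i => a i j' = true)).card ≤ n + 1 := by
        apply colcard j' hj'.1.1
        intro i hi
        simp only [Finset.mem_filter, Finset.mem_Ico] at hi
        exact ⟨hi.1.1, hi.2⟩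
      have hmem : i' ∈ (Finset.Ico 1 k).filter (fun i => a i j' = true) := by
        simp only [Finset.mem_filter, Finset.mem_Ico]
        exact ⟨⟨hi'.1.1, hi'.1.2⟩, hj'.2⟩
      show (((Finset.Ico 1 k).filter (fun i => a i j' = true)).erase i').card ≤ n
      rw [Finset.card_erase_of_mem hmem]
      omega
    · rw [smul_eq_mul]
      exact Nat.mul_le_mul_right n hPcard
  -- conclude |L'| ≤ n³ + n
  have hL'card : L'.card ≤ n ^ 3 + n := by
    have hsplit := Finset.card_filter_add_card_filter_not
      (s := L') (p := fun i => a i l = true)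
    have h3 : n * n * n = n ^ 3 := by ring
    omega
  have hmain : (n + 1) * F.card ≤ (n ^ 3 + n) * n :=
    le_trans hsum (Nat.mul_le_mul_right n hL'card)
  have hC : ({j : ℕ | l < j ∧ colOnes a k j = n + 1}).ncard = F.card :=
    Set.ncard_eq_toFinset_card _ hCfin
  rw [hC, le_div_iff₀ (by positivity : (0 : ℚ) < (n : ℚ) + 1)]
  have hfin : (F.card : ℚ) * ((n : ℚ) + 1) ≤ ((n : ℚ) ^ 3 + (n : ℚ)) * (n : ℚ) := by
    have : F.card * (n + 1) ≤ (n ^ 3 + n) * n := by rw [Nat.mul_comm]; exact hmain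
    exact_mod_cast this
  exact hfin
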